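/- Let p ∈ [0,1/2] and let Λ be the qubit dephasing channel Λ(ρ) = (1−p)ρ + p·σ_z ρ σ_z, where σ_z = diag(1,−1). For any qubit states ρ_x indexed by x = (x₀,x₁) ∈ {0,1}² and any two-outcome qubit POVMs (C^z_0, C^z_1) for z ∈ {0,1}, the average success probability (1/8)·Σ_{x∈{0,1}²} Σ_{z∈{0,1}} tr(Λ(ρ_x) C^z_{x_z}) satisfies the bound (1/8)·Σ_{x,z} tr(Λ(ρ_x) C^z_{x_z}) ≤ 1/2 + (1/4)·√(1 + (1−2p)²). (In particular, at p = 0 this recovers the optimal 2→1 quantum random access code value 1/2 + 1/(2√2).) -/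

import Mathlib

open Matrix
open scoped ComplexOrder

noncomputable section

abbrev Mat2 := Matrix (Fin 2) (Fin 2) ℂ

/-- A qubit state: a positive semidefinite 2×2 complex matrix with unit trace. -/
def IsQubitState (ρ : Mat2) : Prop := ρ.PosSemidef ∧ ρ.trace = 1

/-- A two-outcome qubit POVM: a pair of positive semidefinite matrices summing to the identity. -/
def IsPOVMPair (E₀ E₁ : Mat2) : Prop := E₀.PosSemidef ∧ E₁.PosSemidef ∧ E₀ + E₁ = 1

/-- The `z`-th bit of the pair `(x₀, x₁)`. -/
def sel (x₀ x₁ z : Fin 2) : Fin 2 := if z = 0 then x₀ else x₁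

/-- The Pauli `σ_z` matrix. -/
def sigmaZ : Mat2 := !![1, 0; 0, -1]

/-- The dephasing channel `Λ(ρ) = (1−p)ρ + p σ_z ρ σ_z`. -/
def dephase (p : ℝ) (ρ : Mat2) : Mat2 :=
  ((1 - p : ℝ) : ℂ) • ρ + ((p : ℝ) : ℂ) • (sigmaZ * ρ * sigmaZ)

/-! ### Scalar auxiliary lemmas -/

lemma aux_cs3 (a b c x y z : ℝ) :
    a*x+b*y+c*z ≤ Real.sqrt (a^2+b^2+c^2) * Real.sqrt (x^2+y^2+z^2) := by
  have key : (a*x+b*y+c*z)^2 ≤ (a^2+b^2+c^2)*(x^2+y^2+z^2) := by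
    nlinarith [sq_nonneg (a*y-b*x), sq_nonneg (a*z-c*x), sq_nonneg (b*z-c*y)]
  calc a*x+b*y+c*z ≤ |a*x+b*y+c*z| := le_abs_self _
    _ = Real.sqrt ((a*x+b*y+c*z)^2) := (Real.sqrt_sq_eq_abs _).symm
    _ ≤ Real.sqrt ((a^2+b^2+c^2)*(x^2+y^2+z^2)) := Real.sqrt_le_sqrt key
    _ = _ := Real.sqrt_mul (by positivity) _

lemma aux_traceBound (D cx cy e0 e1 fr fi : ℝ) (he0 : 0 ≤ e0) (he0' : e0 ≤ 1)
    (he1 : 0 ≤ e1) (he1' : e1 ≤ 1) (hf : fr^2+fi^2 ≤ e0*e1)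
    (hf' : fr^2+fi^2 ≤ (1-e0)*(1-e1)) :
    D*(e0-e1) + 2*(cx*fr - cy*fi) ≤ Real.sqrt (D^2 + (cx^2+cy^2)) := by
  have h1 : D*(e0-e1) + 2*(cx*fr - cy*fi)
      ≤ Real.sqrt (D^2+cx^2+cy^2) * Real.sqrt ((e0-e1)^2+(2*fr)^2+(2*fi)^2) := by
    have h := aux_cs3 D cx cy (e0-e1) (2*fr) (-(2*fi))
    rw [show ((-(2*fi))^2 : ℝ) = (2*fi)^2 by ring] at h
    calc D*(e0-e1) + 2*(cx*fr - cy*fi) = D*(e0-e1)+cx*(2*fr)+cy*(-(2*fi)) := by ring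
      _ ≤ _ := h
  have h2 : (e0-e1)^2+(2*fr)^2+(2*fi)^2 ≤ 1 := by
    rcases le_total (e0+e1) 1 with h | h
    · nlinarith
    · nlinarith
  have h3 : Real.sqrt ((e0-e1)^2+(2*fr)^2+(2*fi)^2) ≤ 1 := by
    rw [show (1:ℝ) = Real.sqrt 1 by simp]
    exact Real.sqrt_le_sqrt h2
  calc D*(e0-e1) + 2*(cx*fr - cy*fi) ≤ _ := h1
    _ ≤ Real.sqrt (D^2+cx^2+cy^2) * 1 :=
        mul_le_mul_of_nonneg_left h3 (Real.sqrt_nonneg _)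
    _ = Real.sqrt (D^2+(cx^2+cy^2)) := by rw [mul_one]; ring_nf

lemma aux_dual (s vx vy q : ℝ) : ∃ α gx gy : ℝ, α^2+gx^2+gy^2 = 1 ∧
    Real.sqrt (s^2 + q^2*(vx^2+vy^2)) = α*s + q*(gx*vx+gy*vy) := by
  set L := Real.sqrt (s^2 + q^2*(vx^2+vy^2)) with hL
  have hL2 : L^2 = s^2 + q^2*(vx^2+vy^2) := Real.sq_sqrt (by positivity)
  by_cases h : L = 0
  · refine ⟨1, 0, 0, by norm_num, ?_⟩
    have hs : s = 0 := by nlinarith [hL2, h]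
    have hv : q*vx = 0 ∧ q*vy = 0 := by constructor <;> nlinarith [hL2, h]
    rw [h, hs]; ring_nf
  · have hLpos : 0 < L := lt_of_le_of_ne (Real.sqrt_nonneg _) (Ne.symm h)
    refine ⟨s/L, q*vx/L, q*vy/L, ?_, ?_⟩
    · field_simp
      nlinarith [hL2]
    · field_simp
      nlinarith [hL2]

lemma aux_core (t xa xb A B : ℝ) (ht0: 0≤t)(ht1: t≤1)(hxa: 0≤xa)(hxb: 0≤xb)(hA: 0≤A)(hB: 0≤B)
    (hsum: xa+xb+A+B = 4)(hprod: xa*xb ≤ A*B) :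
    4*(xa+t*A)*(xb+t*B) ≤ (4+4*t-(xa+t*A)-(xb+t*B))^2 := by
  have hsum' : t*(xa+xb+A+B) = t*4 := by rw [hsum]
  have e : 4+4*t-(xa+t*A)-(xb+t*B) = A+B+t*(xa+xb) := by ring_nf; ring_nf at hsum'; linarith
  rw [e]
  have h1 : 0 ≤ (1-t^2) * (A*B - xa*xb) :=
    mul_nonneg (by nlinarith [sq_nonneg t]) (by linarith)
  nlinarith [sq_nonneg ((A-B)+t*(xa-xb)), h1]

lemma aux_core2 (t xa xb A B : ℝ) (ht0: 0≤t)(ht1: t≤1)(hxa: 0≤xa)(hxb: 0≤xb)(hA: 0≤A)(hB: 0≤B)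
    (hsum: xa+xb+A+B = 4)(hprod: xa*xb ≤ A*B) :
    Real.sqrt (xa+t*A) + Real.sqrt (xb+t*B) ≤ 2 * Real.sqrt (1+t) := by
  set X := xa + t*A with hX_def
  set Y := xb + t*B with hY_def
  have hX : 0 ≤ X := by positivity
  have hY : 0 ≤ Y := by positivity
  have hXY : X + Y ≤ 4 + 4*t := by
    have hA' : t*A ≤ A := mul_le_of_le_one_left hA ht1
    have hB' : t*B ≤ B := mul_le_of_le_one_left hB ht1
    simp only [hX_def, hY_def]; linarith
  have hkey : 4*X*Y ≤ (4+4*t-X-Y)^2 := aux_core t xa xb A B ht0 ht1 hxa hxb hA hB hsum hprod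
  have hsqXY : 2 * Real.sqrt (X*Y) ≤ 4+4*t-X-Y := by
    have h4 : 0 ≤ 4+4*t-X-Y := by linarith
    have h5 : Real.sqrt (X*Y) ≤ Real.sqrt (((4+4*t-X-Y)/2)^2) := by
      apply Real.sqrt_le_sqrt; nlinarith
    rw [Real.sqrt_sq (by linarith)] at h5
    linarith
  have hs : (Real.sqrt X + Real.sqrt Y)^2 ≤ 4*(1+t) := by
    have e1 : (Real.sqrt X + Real.sqrt Y)^2 = X + Y + 2*Real.sqrt (X*Y) := by
      rw [add_sq, Real.sq_sqrt hX, Real.sq_sqrt hY, Real.sqrt_mul hX]; ring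
    rw [e1]; linarith
  calc Real.sqrt X + Real.sqrt Y
      = Real.sqrt ((Real.sqrt X + Real.sqrt Y)^2) := by rw [Real.sqrt_sq (by positivity)]
    _ ≤ Real.sqrt (4*(1+t)) := Real.sqrt_le_sqrt hs
    _ = 2 * Real.sqrt (1+t) := by
        rw [show (4:ℝ)*(1+t) = 2^2*(1+t) by ring, Real.sqrt_mul (by positivity),
          Real.sqrt_sq (by norm_num)]

lemma aux_combo (q α0 g0x g0y α1 g1x g1y : ℝ) (hq0 : 0 ≤ q) (hq1 : q ≤ 1)
    (h0 : α0^2+g0x^2+g0y^2 = 1) (h1 : α1^2+g1x^2+g1y^2 = 1) :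
    Real.sqrt ((α0+α1)^2 + q^2*((g0x+g1x)^2+(g0y+g1y)^2))
    + Real.sqrt ((α0-α1)^2 + q^2*((g0x-g1x)^2+(g0y-g1y)^2))
    ≤ 2 * Real.sqrt (1+q^2) := by
  have h := aux_core2 (q^2) ((α0+α1)^2) ((α0-α1)^2) ((g0x+g1x)^2+(g0y+g1y)^2)
    ((g0x-g1x)^2+(g0y-g1y)^2) (sq_nonneg q) (by nlinarith) (sq_nonneg _) (sq_nonneg _)
    (by positivity) (by positivity) (by nlinarith)
    (by nlinarith [sq_nonneg ((g0x+g1x)*(g0y-g1y) - (g0y+g1y)*(g0x-g1x)), sq_nonneg (α0*α1)])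
  linarith [h]

lemma aux_state_term (a br bi wd wx wy q : ℝ) (hball : br^2+bi^2 ≤ a*(1-a)) :
    (a-1/2)*wd + q*(br*wx + bi*wy)
      ≤ 1/2 * Real.sqrt (wd^2 + q^2*(wx^2+wy^2)) := by
  have h1 := aux_cs3 (a-1/2) br bi wd (q*wx) (q*wy)
  have h2 : Real.sqrt ((a-1/2)^2+br^2+bi^2) ≤ 1/2 := by
    have h := Real.sqrt_le_sqrt (show (a-1/2)^2+br^2+bi^2 ≤ ((1/2:ℝ))^2 by nlinarith)
    rwa [Real.sqrt_sq (by norm_num : (0:ℝ) ≤ 1/2)] at h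
  have h3 : Real.sqrt (wd^2+(q*wx)^2+(q*wy)^2) = Real.sqrt (wd^2 + q^2*(wx^2+wy^2)) := by
    ring_nf
  calc (a-1/2)*wd + q*(br*wx + bi*wy)
      = (a-1/2)*wd + br*(q*wx) + bi*(q*wy) := by ring
    _ ≤ Real.sqrt ((a-1/2)^2+br^2+bi^2) * Real.sqrt (wd^2+(q*wx)^2+(q*wy)^2) := h1
    _ ≤ 1/2 * Real.sqrt (wd^2+(q*wx)^2+(q*wy)^2) := by
        apply mul_le_mul_of_nonneg_right h2 (Real.sqrt_nonneg _)
    _ = 1/2 * Real.sqrt (wd^2 + q^2*(wx^2+wy^2)) := by rw [h3]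

lemma aux_master (q : ℝ) (hq0 : 0 ≤ q) (hq1 : q ≤ 1)
    (a00 br00 bi00 a01 br01 bi01 a10 br10 bi10 a11 br11 bi11 : ℝ)
    (h00 : br00^2+bi00^2 ≤ a00*(1-a00)) (h01 : br01^2+bi01^2 ≤ a01*(1-a01))
    (h10 : br10^2+bi10^2 ≤ a10*(1-a10)) (h11 : br11^2+bi11^2 ≤ a11*(1-a11))
    (e00 e01 fr0 fi0 e10 e11 fr1 fi1 : ℝ)
    (he00 : 0 ≤ e00) (he00' : e00 ≤ 1) (he01 : 0 ≤ e01) (he01' : e01 ≤ 1)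
    (hf0 : fr0^2+fi0^2 ≤ e00*e01) (hf0' : fr0^2+fi0^2 ≤ (1-e00)*(1-e01))
    (he10 : 0 ≤ e10) (he10' : e10 ≤ 1) (he11 : 0 ≤ e11) (he11' : e11 ≤ 1)
    (hf1 : fr1^2+fi1^2 ≤ e10*e11) (hf1' : fr1^2+fi1^2 ≤ (1-e10)*(1-e11)) :
      (a00*e00 + (1-a00)*e01 + 2*q*(br00*fr0 - bi00*fi0))
    + (a00*e10 + (1-a00)*e11 + 2*q*(br00*fr1 - bi00*fi1))
    + (a01*e00 + (1-a01)*e01 + 2*q*(br01*fr0 - bi01*fi0))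
    + (a01*(1-e10) + (1-a01)*(1-e11) - 2*q*(br01*fr1 - bi01*fi1))
    + (a10*(1-e00) + (1-a10)*(1-e01) - 2*q*(br10*fr0 - bi10*fi0))
    + (a10*e10 + (1-a10)*e11 + 2*q*(br10*fr1 - bi10*fi1))
    + (a11*(1-e00) + (1-a11)*(1-e01) - 2*q*(br11*fr0 - bi11*fi0))
    + (a11*(1-e10) + (1-a11)*(1-e11) - 2*q*(br11*fr1 - bi11*fi1))
    ≤ 4 + 2*Real.sqrt (1+q^2) := by
  set D0 : ℝ := a00+a01-a10-a11 with hD0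
  set Br0 : ℝ := br00+br01-br10-br11 with hBr0
  set Bi0 : ℝ := bi00+bi01-bi10-bi11 with hBi0
  set D1 : ℝ := a00-a01+a10-a11 with hD1
  set Br1 : ℝ := br00-br01+br10-br11 with hBr1
  set Bi1 : ℝ := bi00-bi01+bi10-bi11 with hBi1
  have hb0 : D0*(e00-e01) + 2*((q*Br0)*fr0 - (q*Bi0)*fi0)
      ≤ Real.sqrt (D0^2 + ((q*Br0)^2+(q*Bi0)^2)) :=
    aux_traceBound D0 (q*Br0) (q*Bi0) e00 e01 fr0 fi0 he00 he00' he01 he01' hf0 hf0'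
  have hb1 : D1*(e10-e11) + 2*((q*Br1)*fr1 - (q*Bi1)*fi1)
      ≤ Real.sqrt (D1^2 + ((q*Br1)^2+(q*Bi1)^2)) :=
    aux_traceBound D1 (q*Br1) (q*Bi1) e10 e11 fr1 fi1 he10 he10' he11 he11' hf1 hf1'
  have hr0 : Real.sqrt (D0^2 + ((q*Br0)^2+(q*Bi0)^2))
      = Real.sqrt (D0^2 + q^2*(Br0^2+Bi0^2)) := by ring_nf
  have hr1 : Real.sqrt (D1^2 + ((q*Br1)^2+(q*Bi1)^2))
      = Real.sqrt (D1^2 + q^2*(Br1^2+Bi1^2)) := by ring_nf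
  rw [hr0] at hb0; rw [hr1] at hb1
  obtain ⟨α0, g0x, g0y, hu0, hL0⟩ := aux_dual D0 Br0 Bi0 q
  obtain ⟨α1, g1x, g1y, hu1, hL1⟩ := aux_dual D1 Br1 Bi1 q
  have t00 := aux_state_term a00 br00 bi00 (α0+α1) (g0x+g1x) (g0y+g1y) q h00
  have t01 := aux_state_term a01 br01 bi01 (α0-α1) (g0x-g1x) (g0y-g1y) q h01
  have t10 := aux_state_term a10 br10 bi10 (-(α0-α1)) (-(g0x-g1x)) (-(g0y-g1y)) q h10
  have t11 := aux_state_term a11 br11 bi11 (-(α0+α1)) (-(g0x+g1x)) (-(g0y+g1y)) q h11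
  have hsq10 : Real.sqrt ((-(α0-α1))^2 + q^2*((-(g0x-g1x))^2+(-(g0y-g1y))^2))
      = Real.sqrt ((α0-α1)^2 + q^2*((g0x-g1x)^2+(g0y-g1y)^2)) := by ring_nf
  have hsq11 : Real.sqrt ((-(α0+α1))^2 + q^2*((-(g0x+g1x))^2+(-(g0y+g1y))^2))
      = Real.sqrt ((α0+α1)^2 + q^2*((g0x+g1x)^2+(g0y+g1y)^2)) := by ring_nf
  rw [hsq10] at t10; rw [hsq11] at t11
  set S1 := Real.sqrt ((α0+α1)^2 + q^2*((g0x+g1x)^2+(g0y+g1y)^2)) with hS1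
  set S2 := Real.sqrt ((α0-α1)^2 + q^2*((g0x-g1x)^2+(g0y-g1y)^2)) with hS2
  have hsum : Real.sqrt (D0^2 + q^2*(Br0^2+Bi0^2)) + Real.sqrt (D1^2 + q^2*(Br1^2+Bi1^2))
      ≤ S1 + S2 := by
    rw [hL0, hL1]
    have key : α0*D0 + q*(g0x*Br0+g0y*Bi0) + (α1*D1 + q*(g1x*Br1+g1y*Bi1))
        = ((a00-1/2)*(α0+α1) + q*(br00*(g0x+g1x) + bi00*(g0y+g1y)))
        + ((a01-1/2)*(α0-α1) + q*(br01*(g0x-g1x) + bi01*(g0y-g1y)))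
        + ((a10-1/2)*(-(α0-α1)) + q*(br10*(-(g0x-g1x)) + bi10*(-(g0y-g1y))))
        + ((a11-1/2)*(-(α0+α1)) + q*(br11*(-(g0x+g1x)) + bi11*(-(g0y+g1y)))) := by
      rw [hD0, hBr0, hBi0, hD1, hBr1, hBi1]; ring
    rw [key]
    linarith [t00, t01, t10, t11]
  have hcombo : S1 + S2 ≤ 2*Real.sqrt (1+q^2) :=
    aux_combo q α0 g0x g0y α1 g1x g1y hq0 hq1 hu0 hu1
  have lhs_eq : (a00*e00 + (1-a00)*e01 + 2*q*(br00*fr0 - bi00*fi0))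
    + (a00*e10 + (1-a00)*e11 + 2*q*(br00*fr1 - bi00*fi1))
    + (a01*e00 + (1-a01)*e01 + 2*q*(br01*fr0 - bi01*fi0))
    + (a01*(1-e10) + (1-a01)*(1-e11) - 2*q*(br01*fr1 - bi01*fi1))
    + (a10*(1-e00) + (1-a10)*(1-e01) - 2*q*(br10*fr0 - bi10*fi0))
    + (a10*e10 + (1-a10)*e11 + 2*q*(br10*fr1 - bi10*fi1))
    + (a11*(1-e00) + (1-a11)*(1-e01) - 2*q*(br11*fr0 - bi11*fi0))
    + (a11*(1-e10) + (1-a11)*(1-e11) - 2*q*(br11*fr1 - bi11*fi1))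
    = 4 + (D0*(e00-e01) + 2*((q*Br0)*fr0 - (q*Bi0)*fi0))
        + (D1*(e10-e11) + 2*((q*Br1)*fr1 - (q*Bi1)*fi1)) := by
    rw [hD0, hBr0, hBi0, hD1, hBr1, hBi1]; ring
  rw [lhs_eq]
  linarith [hb0, hb1, hsum, hcombo]

/-! ### Matrix auxiliary lemmas -/

lemma aux_psd_entry00 (M : Mat2) (hM : M.PosSemidef) : 0 ≤ (M 0 0).re ∧ (M 0 0).im = 0 := by
  have h := hM.dotProduct_mulVec_nonneg ![1, 0]
  simp [dotProduct, mulVec, Fin.sum_univ_two] at h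
  rw [Complex.le_def] at h
  exact ⟨h.1, h.2.symm⟩

lemma aux_psd_entry11 (M : Mat2) (hM : M.PosSemidef) : 0 ≤ (M 1 1).re ∧ (M 1 1).im = 0 := by
  have h := hM.dotProduct_mulVec_nonneg ![0, 1]
  simp [dotProduct, mulVec, Fin.sum_univ_two] at h
  rw [Complex.le_def] at h
  exact ⟨h.1, h.2.symm⟩

lemma aux_psd_det (M : Mat2) (hM : M.PosSemidef) :
    (M 1 0).re^2 + (M 1 0).im^2 ≤ (M 0 0).re * (M 1 1).re := by
  have hdet : M.det = ((hM.1.eigenvalues 0 * hM.1.eigenvalues 1 : ℝ) : ℂ) := by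
    rw [hM.1.det_eq_prod_eigenvalues, Fin.prod_univ_two]
    norm_cast
  have hnn : 0 ≤ (M.det).re := by
    rw [hdet, Complex.ofReal_re]
    exact mul_nonneg (hM.eigenvalues_nonneg 0) (hM.eigenvalues_nonneg 1)
  rw [Matrix.det_fin_two] at hnn
  have h01 : M 0 1 = star (M 1 0) := (hM.1.apply 0 1).symm
  have h00 := (aux_psd_entry00 M hM).2
  have h11 := (aux_psd_entry11 M hM).2
  simp only [Complex.sub_re, Complex.mul_re, h01, Complex.star_def,
    Complex.conj_re, Complex.conj_im, h00, h11] at hnn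
  nlinarith [hnn]

lemma aux_trace_eq (p : ℝ) (ρ E : Mat2) :
    (dephase p ρ * E).trace = ρ 0 0 * E 0 0 + ρ 1 1 * E 1 1
      + ((1-2*p : ℝ) : ℂ) * (ρ 0 1 * E 1 0 + ρ 1 0 * E 0 1) := by
  simp [dephase, sigmaZ, Matrix.trace_fin_two, Matrix.mul_apply, Fin.sum_univ_two,
    Matrix.vecMul, dotProduct]
  ring

lemma aux_trace_re (p : ℝ) (ρ E : Mat2)
    (hρim : (ρ 0 0).im = 0) (htr : ρ 0 0 + ρ 1 1 = 1)
    (hρ10 : ρ 1 0 = starRingEnd ℂ (ρ 0 1))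
    (hE00 : (E 0 0).im = 0) (hE11 : (E 1 1).im = 0)
    (hE01 : E 0 1 = starRingEnd ℂ (E 1 0)) :
    ((dephase p ρ * E).trace).re
      = (ρ 0 0).re * (E 0 0).re + (1 - (ρ 0 0).re) * (E 1 1).re
        + 2*(1-2*p) * ((ρ 0 1).re * (E 1 0).re - (ρ 0 1).im * (E 1 0).im) := by
  have h11 : ρ 1 1 = 1 - ρ 0 0 := by linear_combination htr
  rw [aux_trace_eq, h11, hρ10, hE01]
  simp [Complex.add_re, Complex.mul_re, Complex.sub_re, Complex.ofReal_re,
    Complex.ofReal_im, Complex.conj_re, Complex.conj_im, hρim, hE00, hE11]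
  ring

lemma aux_trace_re0 (p : ℝ) (ρ E F : Mat2) (hρ : IsQubitState ρ)
    (hE : E.PosSemidef) (hF : F.PosSemidef) (hEF : E + F = 1) :
    ((dephase p ρ * E).trace).re
      = (ρ 0 0).re * (E 0 0).re + (1 - (ρ 0 0).re) * (E 1 1).re
        + 2*(1-2*p) * ((ρ 0 1).re * (E 1 0).re - (ρ 0 1).im * (E 1 0).im) := by
  apply aux_trace_re
  · exact (aux_psd_entry00 ρ hρ.1).2
  · have := hρ.2; rwa [Matrix.trace_fin_two] at this
  · exact (hρ.1.1.apply 1 0).symm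
  · exact (aux_psd_entry00 E hE).2
  · exact (aux_psd_entry11 E hE).2
  · exact (hE.1.apply 0 1).symm

lemma aux_trace_re1 (p : ℝ) (ρ E F : Mat2) (hρ : IsQubitState ρ)
    (hE : E.PosSemidef) (hF : F.PosSemidef) (hEF : E + F = 1) :
    ((dephase p ρ * F).trace).re
      = (ρ 0 0).re * (1 - (E 0 0).re) + (1 - (ρ 0 0).re) * (1 - (E 1 1).re)
        - 2*(1-2*p) * ((ρ 0 1).re * (E 1 0).re - (ρ 0 1).im * (E 1 0).im) := by
  have hFeq : F = 1 - E := eq_sub_of_add_eq' hEF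
  have h00 : F 0 0 = 1 - E 0 0 := by rw [hFeq]; simp [Matrix.sub_apply, Matrix.one_apply]
  have h11 : F 1 1 = 1 - E 1 1 := by rw [hFeq]; simp [Matrix.sub_apply, Matrix.one_apply]
  have h10 : F 1 0 = - E 1 0 := by rw [hFeq]; simp [Matrix.sub_apply, Matrix.one_apply]
  have h := aux_trace_re p ρ F (aux_psd_entry00 ρ hρ.1).2
    (by have := hρ.2; rwa [Matrix.trace_fin_two] at this)
    ((hρ.1.1.apply 1 0).symm)
    ((aux_psd_entry00 F hF).2) ((aux_psd_entry11 F hF).2) ((hF.1.apply 0 1).symm)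
  rw [h, h00, h11, h10]
  simp [Complex.sub_re, Complex.one_re, Complex.neg_re, Complex.neg_im]
  ring

set_option maxHeartbeats 2000000 in
/-- Bound on the success probability of the 2→1 quantum random access code when a
dephasing channel with parameter `p` is applied to Alice's states (Appendix D). -/
theorem dephased_qrac_bound
    (p : ℝ) (hp : p ∈ Set.Icc (0 : ℝ) (1 / 2))
    (ρ : Fin 2 → Fin 2 → Mat2) (hρ : ∀ x₀ x₁, IsQubitState (ρ x₀ x₁))
    (C : Fin 2 → Fin 2 → Mat2) (hC : ∀ z, IsPOVMPair (C z 0) (C z 1)) :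
    1 / 8 * ∑ x₀ : Fin 2, ∑ x₁ : Fin 2, ∑ z : Fin 2,
        ((dephase p (ρ x₀ x₁) * C z (sel x₀ x₁ z)).trace).re
    ≤ 1 / 2 + Real.sqrt (1 + (1 - 2 * p) ^ 2) / 4 := by
  obtain ⟨hp0, hp1⟩ := hp
  -- POVM facts
  have hCz := fun z => (hC z)
  -- state scalars
  have hstate : ∀ x₀ x₁ : Fin 2,
      ((ρ x₀ x₁) 0 1).re^2 + ((ρ x₀ x₁) 0 1).im^2
        ≤ ((ρ x₀ x₁) 0 0).re * (1 - ((ρ x₀ x₁) 0 0).re) := by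
    intro x₀ x₁
    have hdet := aux_psd_det (ρ x₀ x₁) (hρ x₀ x₁).1
    have h10 : (ρ x₀ x₁) 1 0 = starRingEnd ℂ ((ρ x₀ x₁) 0 1) := ((hρ x₀ x₁).1.1.apply 1 0).symm
    have htr : (ρ x₀ x₁) 0 0 + (ρ x₀ x₁) 1 1 = 1 := by
      have := (hρ x₀ x₁).2; rwa [Matrix.trace_fin_two] at this
    have h00im := (aux_psd_entry00 (ρ x₀ x₁) (hρ x₀ x₁).1).2
    have h11re : ((ρ x₀ x₁) 1 1).re = 1 - ((ρ x₀ x₁) 0 0).re := by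
      have := congrArg Complex.re htr
      simp [Complex.add_re] at this
      linarith
    rw [h10] at hdet
    simp [Complex.conj_re, Complex.conj_im, h11re] at hdet
    nlinarith [hdet]
  -- POVM scalars
  have hpovm : ∀ z : Fin 2,
      (0 ≤ ((C z 0) 0 0).re ∧ ((C z 0) 0 0).re ≤ 1)
      ∧ (0 ≤ ((C z 0) 1 1).re ∧ ((C z 0) 1 1).re ≤ 1)
      ∧ ((C z 0) 1 0).re^2 + ((C z 0) 1 0).im^2 ≤ ((C z 0) 0 0).re * ((C z 0) 1 1).re
      ∧ ((C z 0) 1 0).re^2 + ((C z 0) 1 0).im^2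
          ≤ (1 - ((C z 0) 0 0).re) * (1 - ((C z 0) 1 1).re) := by
    intro z
    obtain ⟨hE, hF, hEF⟩ := hC z
    have hFeq : C z 1 = 1 - C z 0 := eq_sub_of_add_eq' hEF
    have hF00 : (C z 1) 0 0 = 1 - (C z 0) 0 0 := by
      rw [hFeq]; simp [Matrix.sub_apply, Matrix.one_apply]
    have hF11 : (C z 1) 1 1 = 1 - (C z 0) 1 1 := by
      rw [hFeq]; simp [Matrix.sub_apply, Matrix.one_apply]
    have hF10 : (C z 1) 1 0 = - (C z 0) 1 0 := by
      rw [hFeq]; simp [Matrix.sub_apply, Matrix.one_apply]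
    have h1 := (aux_psd_entry00 _ hE).1
    have h2 := (aux_psd_entry00 _ hF).1
    have h3 := (aux_psd_entry11 _ hE).1
    have h4 := (aux_psd_entry11 _ hF).1
    rw [hF00] at h2; rw [hF11] at h4
    simp [Complex.sub_re, Complex.one_re] at h2 h4
    have h5 := aux_psd_det _ hE
    have h6 := aux_psd_det _ hF
    rw [hF00, hF11, hF10] at h6
    simp [Complex.sub_re, Complex.one_re, Complex.neg_re, Complex.neg_im] at h6
    refine ⟨⟨h1, by linarith⟩, ⟨h3, by linarith⟩, h5, by nlinarith [h6]⟩
  -- expand the sum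
  simp only [Fin.sum_univ_two]
  have hsel00 : sel 0 0 0 = 0 := rfl
  have hsel01 : sel 0 0 1 = 0 := rfl
  obtain ⟨hE0, hF0, hEF0⟩ := hC 0
  obtain ⟨hE1, hF1, hEF1⟩ := hC 1
  rw [show sel 0 0 0 = 0 from rfl, show sel 0 0 1 = 0 from rfl,
      show sel 0 1 0 = 0 from rfl, show sel 0 1 1 = 1 from rfl,
      show sel 1 0 0 = 1 from rfl, show sel 1 0 1 = 0 from rfl,
      show sel 1 1 0 = 1 from rfl, show sel 1 1 1 = 1 from rfl]
  rw [aux_trace_re0 p (ρ 0 0) (C 0 0) (C 0 1) (hρ 0 0) hE0 hF0 hEF0,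
      aux_trace_re0 p (ρ 0 0) (C 1 0) (C 1 1) (hρ 0 0) hE1 hF1 hEF1,
      aux_trace_re0 p (ρ 0 1) (C 0 0) (C 0 1) (hρ 0 1) hE0 hF0 hEF0,
      aux_trace_re1 p (ρ 0 1) (C 1 0) (C 1 1) (hρ 0 1) hE1 hF1 hEF1,
      aux_trace_re1 p (ρ 1 0) (C 0 0) (C 0 1) (hρ 1 0) hE0 hF0 hEF0,
      aux_trace_re0 p (ρ 1 0) (C 1 0) (C 1 1) (hρ 1 0) hE1 hF1 hEF1,
      aux_trace_re1 p (ρ 1 1) (C 0 0) (C 0 1) (hρ 1 1) hE0 hF0 hEF0,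
      aux_trace_re1 p (ρ 1 1) (C 1 0) (C 1 1) (hρ 1 1) hE1 hF1 hEF1]
  have hq0 : 0 ≤ 1 - 2*p := by linarith
  have hq1 : 1 - 2*p ≤ 1 := by linarith
  obtain ⟨⟨he00, he00'⟩, ⟨he01, he01'⟩, hf0, hf0'⟩ := hpovm 0
  obtain ⟨⟨he10, he10'⟩, ⟨he11, he11'⟩, hf1, hf1'⟩ := hpovm 1
  have hm := aux_master (1-2*p) hq0 hq1
    (((ρ 0 0) 0 0).re) (((ρ 0 0) 0 1).re) (((ρ 0 0) 0 1).im)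
    (((ρ 0 1) 0 0).re) (((ρ 0 1) 0 1).re) (((ρ 0 1) 0 1).im)
    (((ρ 1 0) 0 0).re) (((ρ 1 0) 0 1).re) (((ρ 1 0) 0 1).im)
    (((ρ 1 1) 0 0).re) (((ρ 1 1) 0 1).re) (((ρ 1 1) 0 1).im)
    (hstate 0 0) (hstate 0 1) (hstate 1 0) (hstate 1 1)
    (((C 0 0) 0 0).re) (((C 0 0) 1 1).re) (((C 0 0) 1 0).re) (((C 0 0) 1 0).im)
    (((C 1 0) 0 0).re) (((C 1 0) 1 1).re) (((C 1 0) 1 0).re) (((C 1 0) 1 0).im)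
    he00 he00' he01 he01' hf0 hf0' he10 he10' he11 he11' hf1 hf1'
  have hrs : Real.sqrt (1 + (1-2*p)^2) = Real.sqrt (1 + (1 - 2 * p) ^ 2) := rfl
  linarith [hm]
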